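/- Subgradient bound for the Lyapunov function: Define H : ℝⁿ × ℝⁿ → ℝ∪{+∞} by H(u,v) = (f+g)(u) + (1/(2η))‖u−v‖². Along the solution of ẋ(t) + x(t) = prox_{ηf}(x(t) − η∇g(x(t))), the vector z(t) = (−∇g(x(t)) + ∇g(ẋ(t)+x(t)), −(1/η)ẋ(t)) belongs to ∂_L H(ẋ(t)+x(t), x(t)) for every t ≥ 0, and ‖z(t)‖ ≤ (β + 1/η)‖ẋ(t)‖. -/

import Mathlib

open Filter MeasureTheory Set Topology
open scoped RealInnerProductSpace

/-- The Fréchet (viscosity) subdifferential of `h` at `x`. -/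
def frechetSubdiff {E : Type*} [NormedAddCommGroup E] [InnerProductSpace ℝ E]
    (h : E → ℝ) (x : E) : Set E :=
  {v | ∀ ε > (0:ℝ), ∀ᶠ y in nhds x, h x + ⟪v, y - x⟫ - ε * ‖y - x‖ ≤ h y}

/-- The limiting (Mordukhovich) subdifferential of `h` at `x`. -/
def limitingSubdiff {E : Type*} [NormedAddCommGroup E] [InnerProductSpace ℝ E]
    (h : E → ℝ) (x : E) : Set E :=
  {v | ∃ xk vk : ℕ → E, Tendsto xk atTop (𝓝 x) ∧
    Tendsto (fun k => h (xk k)) atTop (𝓝 (h x)) ∧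
    (∀ k, vk k ∈ frechetSubdiff h (xk k)) ∧ Tendsto vk atTop (𝓝 v)}

set_option maxHeartbeats 1000000 in
/-- Subgradient bound for the Lyapunov function
`H(u,v) = (f+g)(u) + (1/(2η))‖u−v‖²`: along the flow
`ẋ(t) + x(t) = prox_{ηf}(x(t) − η∇g(x(t)))`, the vector
`z(t) = (−∇g(x(t)) + ∇g(ẋ(t)+x(t)), −(1/η)ẋ(t))` belongs to
`∂_L H(ẋ(t)+x(t), x(t))` and `‖z(t)‖ ≤ (β + 1/η)‖ẋ(t)‖`. -/
theorem stmt16 (n : ℕ)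
    (f : EuclideanSpace ℝ (Fin n) → ℝ)
    (hf_cvx : ConvexOn ℝ Set.univ f) (hf_lsc : LowerSemicontinuous f)
    (g : EuclideanSpace ℝ (Fin n) → ℝ) (g' : EuclideanSpace ℝ (Fin n) → EuclideanSpace ℝ (Fin n))
    (hg_diff : ∀ z, HasGradientAt g (g' z) z)
    (β : ℝ) (hβ : 0 ≤ β)
    (hg_lip : ∀ a b, ‖g' a - g' b‖ ≤ β * ‖a - b‖)
    (η : ℝ) (hη : 0 < η)
    (x xd : ℝ → EuclideanSpace ℝ (Fin n))
    (hx : ∀ t ≥ (0:ℝ), HasDerivAt x (xd t) t)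
    (hprox : ∀ t ≥ (0:ℝ), ∀ y,
      f (xd t + x t) + ⟪-((1/η) • xd t) - g' (x t), y - (xd t + x t)⟫ ≤ f y)
    (Hfun : WithLp 2 (EuclideanSpace ℝ (Fin n) × EuclideanSpace ℝ (Fin n)) → ℝ)
    (hHfun : ∀ q : WithLp 2 (EuclideanSpace ℝ (Fin n) × EuclideanSpace ℝ (Fin n)),
      Hfun q = f q.fst + g q.fst + (1/(2*η)) * ‖q.fst - q.snd‖ ^ 2)
    (z : ℝ → WithLp 2 (EuclideanSpace ℝ (Fin n) × EuclideanSpace ℝ (Fin n)))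
    (hz : ∀ t : ℝ, z t = (WithLp.equiv 2 _).symm
      (-g' (x t) + g' (xd t + x t), -((1/η) • xd t))) :
    ∀ t ≥ (0:ℝ),
      z t ∈ limitingSubdiff Hfun ((WithLp.equiv 2 _).symm (xd t + x t, x t)) ∧
      ‖z t‖ ≤ (β + 1/η) * ‖xd t‖ := by
  intro t ht
  set u : EuclideanSpace ℝ (Fin n) := xd t + x t with hu
  set v : EuclideanSpace ℝ (Fin n) := x t with hv
  have huv : u - v = xd t := add_sub_cancel_right _ _
  set p : WithLp 2 (EuclideanSpace ℝ (Fin n) × EuclideanSpace ℝ (Fin n)) :=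
    (WithLp.equiv 2 _).symm (u, v) with hp
  have hp1 : p.fst = u := rfl
  have hp2 : p.snd = v := rfl
  have hz1 : (z t).fst = -g' v + g' u := by rw [hz]; rfl
  have hz2 : (z t).snd = -((1/η) • xd t) := by rw [hz]; rfl
  constructor
  · -- limiting subdifferential membership via Fréchet membership and constant sequences
    have hfre : z t ∈ frechetSubdiff Hfun p := by
      intro ε hε
      have hgo : ∀ᶠ y in 𝓝 u, ‖g y - g u - ⟪g' u, y - u⟫‖ ≤ ε * ‖y - u‖ := by
        simpa [InnerProductSpace.toDual_apply_apply] using (hg_diff u).hasFDerivAt.isLittleO.def hε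
      have hcont : Continuous fun q : WithLp 2 (EuclideanSpace ℝ (Fin n) × EuclideanSpace ℝ (Fin n)) => q.fst :=
        continuous_fst.comp (WithLp.prodContinuousLinearEquiv 2 ℝ _ _).continuous
      have hev : ∀ᶠ q : WithLp 2 (EuclideanSpace ℝ (Fin n) × EuclideanSpace ℝ (Fin n)) in 𝓝 p,
          ‖g q.fst - g u - ⟪g' u, q.fst - u⟫‖ ≤ ε * ‖q.fst - u‖ :=
        (hcont.tendsto p).eventually hgo
      filter_upwards [hev] with q hq
      rw [hHfun, hHfun]
      set y : EuclideanSpace ℝ (Fin n) := q.fst with hy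
      set w : EuclideanSpace ℝ (Fin n) := q.snd with hw
      have h1 : f u + ⟪-((1/η) • xd t) - g' v, y - u⟫ ≤ f y := hprox t ht y
      have h2 : g u + ⟪g' u, y - u⟫ - ε * ‖y - u‖ ≤ g y := by
        rw [Real.norm_eq_abs] at hq
        have := (abs_le.mp hq).1
        linarith
      -- quadratic part
      have hexp : ‖y - w‖^2 = ‖u - v‖^2 + 2 * ⟪u - v, (y - w) - (u - v)⟫ + ‖(y - w) - (u - v)‖^2 := by
        have h := norm_add_sq_real (u - v) ((y - w) - (u - v))
        rw [add_sub_cancel] at h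
        linarith
      have hc : (0:ℝ) < 1/(2*η) := by positivity
      have h3 : (1/(2*η)) * ‖u - v‖^2 + (1/η) * ⟪u - v, (y - w) - (u - v)⟫
          ≤ (1/(2*η)) * ‖y - w‖^2 := by
        have hkey : (1/η : ℝ) = 2 * (1/(2*η)) := by field_simp
        nlinarith [mul_nonneg hc.le (sq_nonneg ‖(y - w) - (u - v)‖)]
      -- inner product of z with q - p
      have hinner : ⟪z t, q - p⟫ = ⟪-g' v + g' u, y - u⟫ + ⟪-((1/η) • xd t), w - v⟫ := by
        rw [WithLp.prod_inner_apply]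
        change ⟪(z t).fst, (q - p).fst⟫ + ⟪(z t).snd, (q - p).snd⟫ = _
        have e1 : (q - p).fst = y - u := rfl
        have e2 : (q - p).snd = w - v := rfl
        rw [e1, e2, hz1, hz2]
      -- norm bound for first component
      have hn1 : ‖y - u‖ ≤ ‖q - p‖ := by
        rw [WithLp.prod_norm_eq_of_L2]
        have hs : ‖y - u‖ = Real.sqrt (‖y - u‖^2) := (Real.sqrt_sq (norm_nonneg _)).symm
        rw [hs]
        apply Real.sqrt_le_sqrt
        have e1 : (q - p).fst = y - u := rfl
        rw [e1]
        nlinarith [sq_nonneg ‖(q - p).snd‖]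
      -- expand inner products into scalar atoms
      have e3 : ⟪(u - v : EuclideanSpace ℝ (Fin n)), (y - w) - (u - v)⟫
          = ⟪xd t, y - u⟫ - ⟪xd t, w - v⟫ := by
        have hd : (y - w) - (u - v) = (y - u) - (w - v) := by abel
        rw [hd, inner_sub_right, huv]
      have e4 : ⟪-((1/η) • xd t) - g' v, y - u⟫
          = -((1/η) * ⟪xd t, y - u⟫) - ⟪g' v, y - u⟫ := by
        rw [inner_sub_left, inner_neg_left, real_inner_smul_left]
      have e5 : ⟪(-g' v + g' u : EuclideanSpace ℝ (Fin n)), y - u⟫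
          = -⟪g' v, y - u⟫ + ⟪g' u, y - u⟫ := by
        rw [inner_add_left, inner_neg_left]
      have e6 : ⟪(-((1/η) • xd t) : EuclideanSpace ℝ (Fin n)), w - v⟫
          = -((1/η) * ⟪xd t, w - v⟫) := by
        rw [inner_neg_left, real_inner_smul_left]
      rw [hinner, hp1, hp2, e5, e6]
      rw [e3] at h3
      rw [e4] at h1
      have hεn : ε * ‖y - u‖ ≤ ε * ‖q - p‖ := mul_le_mul_of_nonneg_left hn1 hε.le
      linarith
    exact ⟨fun _ => p, fun _ => z t, tendsto_const_nhds, tendsto_const_nhds,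
      fun _ => hfre, tendsto_const_nhds⟩
  · -- norm bound
    have hb1 : ‖(z t).fst‖ ≤ β * ‖xd t‖ := by
      rw [hz1, neg_add_eq_sub, ← huv]
      exact hg_lip u v
    have hb2 : ‖(z t).snd‖ = (1/η) * ‖xd t‖ := by
      rw [hz2, norm_neg, norm_smul, Real.norm_eq_abs, abs_of_pos (by positivity)]
    have htri : ‖z t‖ ≤ ‖(z t).fst‖ + ‖(z t).snd‖ := by
      rw [WithLp.prod_norm_eq_of_L2]
      have h := Real.sqrt_le_sqrt (show ‖(z t).fst‖^2 + ‖(z t).snd‖^2 ≤ (‖(z t).fst‖ + ‖(z t).snd‖)^2 by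
        nlinarith [norm_nonneg (z t).fst, norm_nonneg (z t).snd])
      rwa [Real.sqrt_sq (by positivity)] at h
    have hsum : (β + 1/η) * ‖xd t‖ = β * ‖xd t‖ + (1/η) * ‖xd t‖ := by ring
    linarith
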